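/- arXiv:math/0508133 — 2 statements merged into one kernel-verified Lean document; each statement's English description precedes it below -/
import Mathlib

section
/- Let A be a commutative ring and Q a finitely generated A-module of length 2. Then either Q is a cyclic A-module (i.e., Q ≅ A/J for some ideal J), or Q ≅ A/m ⊕ A/m for some maximal ideal m of A. -/
/-- `Q` has length `n` as an `A`-module: there is a composition series from `⊥` to `⊤`
of length `n`. -/
def moduleLengthEq (A : Type) [CommRing A] (Q : Type) [AddCommGroup Q] [Module A Q]
    (n : ℕ) : Prop :=
  ∃ s : CompositionSeries (Submodule A Q), s.head = ⊥ ∧ s.last = ⊤ ∧ s.length = n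

section aux

variable {A : Type} [CommRing A] {Q : Type} [AddCommGroup Q] [Module A Q]

/-- If no element of `Q` generates `Q`, `S` is both an atom and a coatom, and `q ∉ S`,
then `S` and `span {q}` are complementary. -/
lemma isCompl_span_of_not_cyclic
    (hnc : ¬ ∃ x : Q, Submodule.span A {x} = ⊤)
    {S : Submodule A Q} (hA : IsAtom S) (hC : IsCoatom S) {q : Q} (hq : q ∉ S) :
    IsCompl S (Submodule.span A {q}) := by
  have hsup : S ⊔ Submodule.span A {q} = ⊤ := by
    apply hC.2
    refine lt_of_le_of_ne le_sup_left fun h => hq ?_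
    have : q ∈ S ⊔ Submodule.span A {q} :=
      Submodule.mem_sup_right (Submodule.mem_span_singleton_self q)
    rwa [← h] at this
  have hinf : S ⊓ Submodule.span A {q} = ⊥ := by
    rcases (hA.le_iff.mp inf_le_left) with h | h
    · exact h
    · exfalso
      apply hnc
      refine ⟨q, ?_⟩
      have hS : S ≤ Submodule.span A {q} := h ▸ inf_le_right
      rw [← hsup, sup_eq_right.mpr hS]
  exact ⟨disjoint_iff.mpr hinf, codisjoint_iff.mpr hsup⟩

end aux

/-- A finitely generated module of length `2` over a commutative ring is either cyclic
(isomorphic to `A ⧸ J` for some ideal `J`), or isomorphic to `A ⧸ m ⊕ A ⧸ m` for some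
maximal ideal `m`. -/
theorem cyclic_or_square_of_length_two (A : Type) [CommRing A]
    (Q : Type) [AddCommGroup Q] [Module A Q] [Module.Finite A Q]
    (hlen : moduleLengthEq A Q 2) :
    (∃ J : Ideal A, Nonempty ((A ⧸ J) ≃ₗ[A] Q)) ∨
    (∃ m : Ideal A, m.IsMaximal ∧ Nonempty (((A ⧸ m) × (A ⧸ m)) ≃ₗ[A] Q)) := by
  by_cases hcyc : ∃ x : Q, Submodule.span A {x} = ⊤
  · -- cyclic case
    obtain ⟨x, hx⟩ := hcyc
    left
    have hsurj : Function.Surjective (LinearMap.toSpanSingleton A Q x) := by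
      rw [← LinearMap.range_eq_top, ← LinearMap.span_singleton_eq_range, hx]
    exact ⟨LinearMap.ker (LinearMap.toSpanSingleton A Q x),
      ⟨LinearMap.quotKerEquivOfSurjective _ hsurj⟩⟩
  · right
    obtain ⟨s, hh, hl, hlen2⟩ := hlen
    -- name the middle submodule
    set N : Submodule A Q := s ⟨1, by omega⟩ with hN
    have h0 : s ⟨0, by omega⟩ = ⊥ := by
      rw [← hh]; rfl
    have h2 : s ⟨s.length, by omega⟩ = ⊤ := by
      rw [← hl]; rfl
    have h2' : s ⟨2, by omega⟩ = ⊤ := by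
      have he : (⟨2, by omega⟩ : Fin (s.length + 1)) = ⟨s.length, by omega⟩ :=
        Fin.ext (by simp [hlen2])
      rw [he, h2]
    have hcov0 : (⊥ : Submodule A Q) ⋖ N := by
      rw [← h0]; exact s.step ⟨0, by omega⟩
    have hcov1 : N ⋖ (⊤ : Submodule A Q) := by
      rw [← h2']; exact s.step ⟨1, by omega⟩
    have hatomN : IsAtom N := bot_covBy_iff.mp hcov0
    have hcoatomN : IsCoatom N := covBy_top_iff.mp hcov1
    -- N is simple, Q/N is simple
    have hsimpleN : IsSimpleModule A N := isSimpleModule_iff_isAtom.mpr hatomN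
    have hsimpleQN : IsSimpleModule A (Q ⧸ N) := isSimpleModule_iff_isCoatom.mpr hcoatomN
    -- pick q ∉ N
    obtain ⟨q, hq⟩ : ∃ q : Q, q ∉ N := by
      by_contra h
      push_neg at h
      exact hcoatomN.1 (eq_top_iff.mpr fun y _ => h y)
    set P := Submodule.span A {q} with hP
    have hcompl : IsCompl N P := isCompl_span_of_not_cyclic hcyc hatomN hcoatomN hq
    -- P ≃ Q/N simple
    have ePQN : (Q ⧸ N) ≃ₗ[A] P := Submodule.quotientEquivOfIsCompl N P hcompl
    have hsimpleP : IsSimpleModule A P := IsSimpleModule.congr ePQN.symm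
    have hatomP : IsAtom P := isSimpleModule_iff_isAtom.mp hsimpleP
    have eNQP : (Q ⧸ P) ≃ₗ[A] N := Submodule.quotientEquivOfIsCompl P N hcompl.symm
    have hsimpleQP : IsSimpleModule A (Q ⧸ P) := IsSimpleModule.congr eNQP
    have hcoatomP : IsCoatom P := isSimpleModule_iff_isCoatom.mp hsimpleQP
    -- N ≃ A/m₁, P ≃ A/m₂
    obtain ⟨m₁, hm₁, ⟨e₁⟩⟩ := isSimpleModule_iff_quot_maximal.mp hsimpleN
    obtain ⟨m₂, hm₂, ⟨e₂⟩⟩ := isSimpleModule_iff_quot_maximal.mp hsimpleP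
    -- the element with both coordinates 1
    have : Nontrivial (A ⧸ m₁) := Ideal.Quotient.nontrivial_iff.mpr hm₁.ne_top
    have : Nontrivial (A ⧸ m₂) := Ideal.Quotient.nontrivial_iff.mpr hm₂.ne_top
    set n₀ : N := e₁.symm 1 with hn₀
    set p₀ : P := e₂.symm 1 with hp₀
    have hn₀ne : n₀ ≠ 0 := fun h => one_ne_zero (α := A ⧸ m₁)
      (by rw [← e₁.apply_symm_apply 1, ← hn₀, h, map_zero])
    have hp₀ne : p₀ ≠ 0 := fun h => one_ne_zero (α := A ⧸ m₂)
      (by rw [← e₂.apply_symm_apply 1, ← hp₀, h, map_zero])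
    set q' : Q := (n₀ : Q) + (p₀ : Q) with hq'
    have hq'N : q' ∉ N := by
      intro h
      have hpN : (p₀ : Q) ∈ N := by
        have : (p₀ : Q) = q' - (n₀ : Q) := by rw [hq']; abel
        rw [this]; exact Submodule.sub_mem N h n₀.2
      have : (p₀ : Q) ∈ N ⊓ P := ⟨hpN, p₀.2⟩
      rw [hcompl.inf_eq_bot] at this
      exact hp₀ne (Subtype.ext (by simpa using this))
    have hq'P : q' ∉ P := by
      intro h
      have hnP : (n₀ : Q) ∈ P := by
        have : (n₀ : Q) = q' - (p₀ : Q) := by rw [hq']; abel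
        rw [this]; exact Submodule.sub_mem P h p₀.2
      have : (n₀ : Q) ∈ N ⊓ P := ⟨n₀.2, hnP⟩
      rw [hcompl.inf_eq_bot] at this
      exact hn₀ne (Subtype.ext (by simpa using this))
    -- span{q'} complements both N and P, hence A/m₁ ≃ A/m₂
    have hcN : IsCompl N (Submodule.span A {q'}) :=
      isCompl_span_of_not_cyclic hcyc hatomN hcoatomN hq'N
    have hcP : IsCompl P (Submodule.span A {q'}) :=
      isCompl_span_of_not_cyclic hcyc hatomP hcoatomP hq'P
    have eKey : (A ⧸ m₂) ≃ₗ[A] (A ⧸ m₁) :=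
      e₂.symm.trans <| ePQN.symm.trans <|
        (Submodule.quotientEquivOfIsCompl N _ hcN).trans <|
        ((Submodule.quotientEquivOfIsCompl P _ hcP).symm.trans (eNQP.trans e₁))
    have hmeq : m₂ = m₁ := by
      rw [← Ideal.annihilator_quotient (I := m₂), ← Ideal.annihilator_quotient (I := m₁)]
      exact eKey.annihilator_eq
    subst hmeq
    refine ⟨m₂, hm₂, ⟨?_⟩⟩
    exact (LinearEquiv.prodCongr e₁.symm e₂.symm).trans (Submodule.prodEquivOfIsCompl N P hcompl)
end

section
/- Let R be a commutative ring and I an ideal generated by a regular sequence x, y of length 2. Then for every n ≥ 1, the natural surjection Sym^n(I) → I^n is an isomorphism of R-modules. -/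
open PiTensorProduct TensorProduct Pointwise

noncomputable section

/-- The submodule of the `n`-th tensor power of `M` generated by differences of pure
tensors that differ by a permutation of the factors. -/
def symRel (R M : Type) [CommRing R] [AddCommGroup M] [Module R M] (n : ℕ) :
    Submodule R (⨂[R] _ : Fin n, M) :=
  Submodule.span R
    {x | ∃ (v : Fin n → M) (σ : Equiv.Perm (Fin n)), x = tprod R v - tprod R (v ∘ σ)}

/-- The `n`-th symmetric power of the `R`-module `M`. -/
def SymPow (R M : Type) [CommRing R] [AddCommGroup M] [Module R M] (n : ℕ) : Type :=
  (⨂[R] _ : Fin n, M) ⧸ symRel R M n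

instance (R M : Type) [CommRing R] [AddCommGroup M] [Module R M] (n : ℕ) :
    AddCommGroup (SymPow R M n) :=
  inferInstanceAs (AddCommGroup ((⨂[R] _ : Fin n, M) ⧸ symRel R M n))

instance (R M : Type) [CommRing R] [AddCommGroup M] [Module R M] (n : ℕ) :
    Module R (SymPow R M n) :=
  inferInstanceAs (Module R ((⨂[R] _ : Fin n, M) ⧸ symRel R M n))

/-- The multiplication map `Sym^n(I) → R` induced by `(x₁, …, xₙ) ↦ x₁ ⋯ xₙ` for an
ideal `I` of `R`; its image is `I ^ n`. -/
def symPowMul (R : Type) [CommRing R] (I : Ideal R) (n : ℕ) :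
    SymPow R ↥I n →ₗ[R] R :=
  Submodule.liftQ _
    (PiTensorProduct.lift
      ((MultilinearMap.mkPiAlgebra R (Fin n) R).compLinearMap fun _ => I.subtype))
    (by
      rw [symRel, Submodule.span_le]
      rintro _ ⟨v, σ, rfl⟩
      simp only [SetLike.mem_coe, LinearMap.mem_ker, map_sub, PiTensorProduct.lift.tprod,
        MultilinearMap.compLinearMap_apply, MultilinearMap.mkPiAlgebra_apply,
        Function.comp_apply, Submodule.coe_subtype, sub_eq_zero]
      exact (Equiv.prod_comp σ fun i => ((v i : R))).symm)

theorem exists_perm_mem_iff {α : Type*} [Fintype α] [DecidableEq α] (s t : Finset α)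
    (h : s.card = t.card) : ∃ σ : Equiv.Perm α, ∀ j, σ j ∈ s ↔ j ∈ t := by
  classical
  have hc : (tᶜ).card = (sᶜ).card := by simp [Finset.card_compl, h]
  let e1 : (t : Finset α) ≃ s := Finset.equivOfCardEq h.symm
  let e2 : (tᶜ : Finset α) ≃ (sᶜ : Finset α) := Finset.equivOfCardEq hc
  let eqt : {a // ¬ a ∈ t} ≃ (tᶜ : Finset α) :=
    Equiv.subtypeEquivRight (fun a => (Finset.mem_compl).symm)
  let eqs : {a // ¬ a ∈ s} ≃ (sᶜ : Finset α) :=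
    Equiv.subtypeEquivRight (fun a => (Finset.mem_compl).symm)
  refine ⟨(Equiv.sumCompl (· ∈ t)).symm.trans
    ((e1.sumCongr (eqt.trans (e2.trans eqs.symm))).trans (Equiv.sumCompl (· ∈ s))), ?_⟩
  intro j
  by_cases hj : j ∈ t
  · simp only [Equiv.trans_apply, Equiv.sumCompl_symm_apply_of_pos hj, Equiv.sumCongr_apply,
      Sum.map_inl, Equiv.sumCompl_apply_inl]
    simp [hj, (e1 ⟨j, hj⟩).2]
  · simp only [Equiv.trans_apply, Equiv.sumCompl_symm_apply_of_neg hj, Equiv.sumCongr_apply,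
      Sum.map_inr, Equiv.sumCompl_apply_inr]
    simp only [hj, iff_false]
    exact (eqs.symm (e2 (eqt ⟨j, hj⟩))).2

theorem syz {R : Type} [CommRing R] (x y : R) (hx : x ∈ nonZeroDivisors R)
    (hy : Ideal.Quotient.mk (Ideal.span {x}) y ∈ nonZeroDivisors (R ⧸ Ideal.span {x})) :
    ∀ (n : ℕ) (a : ℕ → R), (∑ i ∈ Finset.range (n+1), a i * x^i * y^(n-i)) = 0 →
      ∃ c : ℕ → R, c 0 = 0 ∧ c (n+1) = 0 ∧ ∀ i ≤ n, a i = y * c i - x * c (i+1) := by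
  intro n
  induction n with
  | zero =>
    intro a h
    simp at h
    exact ⟨0, rfl, rfl, by intro i hi; interval_cases i; simp [h]⟩
  | succ n ih =>
    intro a h
    have hxq : Ideal.Quotient.mk (Ideal.span {x}) x = 0 :=
      Ideal.Quotient.eq_zero_iff_mem.2 (Ideal.subset_span rfl)
    have h0 : a 0 ∈ Ideal.span ({x} : Set R) := by
      have hq := congrArg (Ideal.Quotient.mk (Ideal.span {x})) h
      rw [map_sum, Finset.sum_range_succ'] at hq
      simp only [_root_.map_mul, map_pow, hxq, zero_pow (Nat.succ_ne_zero _), mul_zero, zero_mul,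
        Finset.sum_const_zero, zero_add, pow_zero, mul_one, map_zero, Nat.sub_zero] at hq
      exact Ideal.Quotient.eq_zero_iff_mem.1 ((pow_mem hy (n+1)).2 _ hq)
    obtain ⟨b, hb⟩ := Ideal.mem_span_singleton'.1 h0
    set a' : ℕ → R := fun i => a (i+1) + (if i = 0 then b * y else 0) with ha'
    have key : (∑ i ∈ Finset.range (n+1), a' i * x^i * y^(n-i)) = 0 := by
      apply hx.2
      have expand : ∀ i ∈ Finset.range (n+1), a' i * x^i * y^(n-i) * x
          = a (i+1) * x^(i+1) * y^(n+1-(i+1)) + (if i = 0 then b * x * y^(n+1) else 0) := by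
        intro i hi
        simp only [ha']
        rcases Nat.eq_zero_or_pos i with rfl | hpos
        · simp only [reduceIte, Nat.sub_zero, pow_zero, Nat.add_sub_cancel]
          ring
        · rw [if_neg (by omega), if_neg (by omega), Nat.succ_sub_succ, add_zero, add_zero]
          ring
      rw [Finset.sum_mul, Finset.sum_congr rfl expand, Finset.sum_add_distrib,
        Finset.sum_ite_eq' (Finset.range (n+1)) 0 (fun _ => b * x * y^(n+1)),
        if_pos (Finset.mem_range.2 (Nat.succ_pos n))]
      calc (∑ i ∈ Finset.range (n+1), a (i+1) * x^(i+1) * y^(n+1-(i+1))) + b * x * y^(n+1)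
          = ∑ i ∈ Finset.range (n+2), a i * x^i * y^(n+1-i) := by
            rw [Finset.sum_range_succ' (fun i => a i * x^i * y^(n+1-i)) (n+1)]
            simp only [pow_zero, mul_one, Nat.sub_zero, hb]
        _ = 0 := h
    obtain ⟨c'', hc0, hcn, hc⟩ := ih a' key
    refine ⟨fun i => match i with
      | 0 => 0
      | 1 => -b
      | (k+2) => c'' (k+1), rfl, hcn, ?_⟩
    intro i hi
    match i with
    | 0 => simpa using by linear_combination -hb
    | 1 =>
      have h1 := hc 0 (Nat.zero_le n)
      simp only [ha', reduceIte, hc0, mul_zero, zero_sub, zero_add] at h1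
      show a 1 = y * (-b) - x * c'' 1
      linear_combination h1
    | (k+2) =>
      have h2 := hc (k+1) (by omega)
      simp only [ha', if_neg (Nat.succ_ne_zero k), add_zero] at h2
      exact h2

section SymPowAux

variable {R M : Type} [CommRing R] [AddCommGroup M] [Module R M]

theorem SymPow.mk_perm {n : ℕ} (v : Fin n → M) (σ : Equiv.Perm (Fin n)) :
    (Submodule.Quotient.mk (tprod R v) : SymPow R M n) =
      Submodule.Quotient.mk (tprod R (v ∘ σ)) :=
  (Submodule.Quotient.eq _).2 (Submodule.subset_span ⟨v, σ, rfl⟩)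

theorem card_filter_coe_lt {n : ℕ} {k : ℕ} (hk : k ≤ n) :
    (Finset.univ.filter fun j : Fin n => (j : ℕ) < k).card = k := by
  have : (Finset.univ.filter fun j : Fin n => (j : ℕ) < k)
      = Finset.map (Fin.castLEEmb hk) Finset.univ := by
    ext j
    simp only [Finset.mem_filter, Finset.mem_univ, true_and, Finset.mem_map, Fin.castLEEmb,
      Function.Embedding.coeFn_mk]
    constructor
    · intro h; exact ⟨⟨(j : ℕ), h⟩, by ext; simp [Fin.castLE]⟩
    · rintro ⟨i, rfl⟩; exact i.isLt
  rw [this, Finset.card_map, Finset.card_univ, Fintype.card_fin]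

theorem SymPow.sort {n : ℕ} (X Y : M) (s : Finset (Fin n)) :
    (Submodule.Quotient.mk (tprod R fun j => if j ∈ s then X else Y) : SymPow R M n)
      = Submodule.Quotient.mk (tprod R fun j : Fin n => if (j : ℕ) < s.card then X else Y) := by
  have hcard : s.card ≤ n := by
    simpa using Finset.card_le_univ s
  set t : Finset (Fin n) := Finset.univ.filter fun j : Fin n => (j : ℕ) < s.card with ht
  have htc : s.card = t.card := by rw [ht, card_filter_coe_lt hcard]
  obtain ⟨σ, hσ⟩ := exists_perm_mem_iff s t htc
  rw [SymPow.mk_perm (fun j => if j ∈ s then X else Y) σ]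
  congr 1
  congr 1
  funext j
  have : σ j ∈ s ↔ (j : ℕ) < s.card := (hσ j).trans (by simp [ht])
  exact if_congr this rfl rfl

theorem SymPow.mem_span {n : ℕ} (X Y : M) (hXY : ∀ m : M, ∃ a b : R, m = a • X + b • Y)
    (z : SymPow R M n) :
    z ∈ Submodule.span R (Set.range fun i : Fin (n+1) =>
      (Submodule.Quotient.mk (tprod R fun j : Fin n => if (j : ℕ) < (i : ℕ) then X else Y) :
        SymPow R M n)) := by
  classical
  obtain ⟨w, rfl⟩ := Submodule.Quotient.mk_surjective _ z
  induction w using PiTensorProduct.induction_on with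
  | add u w hu hw =>
    rw [show (Submodule.Quotient.mk (u + w) : SymPow R M n)
      = Submodule.Quotient.mk u + Submodule.Quotient.mk w from rfl]
    exact Submodule.add_mem _ hu hw
  | smul_tprod r v =>
    rw [show (Submodule.Quotient.mk (r • tprod R v) : SymPow R M n)
      = r • Submodule.Quotient.mk (tprod R v) from rfl]
    refine Submodule.smul_mem _ r ?_
    choose a b hab using fun j => hXY (v j)
    have hv : v = (fun j => a j • X) + (fun j => b j • Y) := funext hab
    rw [hv, MultilinearMap.map_add_univ]
    rw [show (Submodule.Quotient.mk (∑ s : Finset (Fin n),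
          tprod R (s.piecewise (fun j => a j • X) (fun j => b j • Y))) : SymPow R M n)
        = ∑ s : Finset (Fin n), Submodule.Quotient.mk
            (tprod R (s.piecewise (fun j => a j • X) (fun j => b j • Y))) from
      map_sum (Submodule.mkQ _) _ _]
    refine Submodule.sum_mem _ fun s _ => ?_
    have hpw : s.piecewise (fun j => a j • X) (fun j => b j • Y)
        = fun j => (if j ∈ s then a j else b j) • (if j ∈ s then X else Y) := by
      funext j
      by_cases h : j ∈ s <;> simp [Finset.piecewise, h]
    rw [hpw, MultilinearMap.map_smul_univ]
    rw [show (Submodule.Quotient.mk ((∏ j, if j ∈ s then a j else b j) •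
          tprod R fun j => if j ∈ s then X else Y) : SymPow R M n)
        = (∏ j, if j ∈ s then a j else b j) •
          Submodule.Quotient.mk (tprod R fun j => if j ∈ s then X else Y) from rfl]
    refine Submodule.smul_mem _ _ ?_
    rw [SymPow.sort X Y s]
    have hcard : s.card < n + 1 := Nat.lt_succ_of_le (by simpa using Finset.card_le_univ s)
    exact Submodule.subset_span (M := (⨂[R] _ : Fin n, M) ⧸ symRel R M n) ⟨⟨s.card, hcard⟩, rfl⟩

theorem SymPow.swap_smul {n : ℕ} (X Y : M) (x y : R) (hs : x • Y = y • X)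
    {k : ℕ} (hk : k < n) :
    x • (Submodule.Quotient.mk (tprod R fun j : Fin n => if (j : ℕ) < k then X else Y) :
        SymPow R M n)
      = y • Submodule.Quotient.mk (tprod R fun j : Fin n => if (j : ℕ) < k + 1 then X else Y) := by
  classical
  set i : Fin n := ⟨k, hk⟩ with hi
  set v : Fin n → M := fun j => if (j : ℕ) < k then X else Y with hv
  have h1 : v = Function.update v i Y := by
    funext j
    rcases eq_or_ne j i with rfl | hne
    · simp [Function.update, hv, hi]
    · simp [Function.update, hne, hv]
  have h2 : (fun j : Fin n => if (j : ℕ) < k + 1 then X else Y) = Function.update v i X := by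
    funext j
    rcases eq_or_ne j i with rfl | hne
    · simp [Function.update, hv, hi]
    · have : (j : ℕ) ≠ k := fun h => hne (Fin.ext (by simp [h, hi]))
      simp only [Function.update, dif_neg hne, hv]
      exact if_congr (by omega) rfl rfl
  calc x • (Submodule.Quotient.mk (tprod R v) : SymPow R M n)
      = Submodule.Quotient.mk (x • tprod R v) := rfl
    _ = Submodule.Quotient.mk (x • tprod R (Function.update v i Y)) := by rw [← h1]
    _ = Submodule.Quotient.mk (tprod R (Function.update v i (x • Y))) := by
        rw [MultilinearMap.map_update_smul]
    _ = Submodule.Quotient.mk (tprod R (Function.update v i (y • X))) := by rw [hs]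
    _ = Submodule.Quotient.mk (y • tprod R (Function.update v i X)) := by
        rw [MultilinearMap.map_update_smul]
    _ = y • Submodule.Quotient.mk (tprod R (Function.update v i X)) := rfl
    _ = y • Submodule.Quotient.mk (tprod R fun j : Fin n => if (j : ℕ) < k + 1 then X else Y) := by
        rw [← h2]

end SymPowAux

theorem symPowMul_mk_tprod {R : Type} [CommRing R] (I : Ideal R) (n : ℕ) (v : Fin n → ↥I) :
    symPowMul R I n (Submodule.Quotient.mk (tprod R v)) = ∏ j, (v j : R) := by
  rw [show symPowMul R I n (Submodule.Quotient.mk (tprod R v)) = PiTensorProduct.lift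
      ((MultilinearMap.mkPiAlgebra R (Fin n) R).compLinearMap fun _ => I.subtype)
      (tprod R v) from rfl, PiTensorProduct.lift.tprod]
  simp

theorem symPowMul_e {R : Type} [CommRing R] (I : Ideal R) (n : ℕ) (X Y : ↥I) {k : ℕ}
    (hk : k ≤ n) :
    symPowMul R I n
        (Submodule.Quotient.mk (tprod R fun j : Fin n => if (j : ℕ) < k then X else Y))
      = (X : R)^k * (Y : R)^(n-k) := by
  classical
  rw [symPowMul_mk_tprod]
  rw [Finset.prod_congr rfl fun j _ => apply_ite (fun m : ↥I => (m : R)) _ _ _]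
  rw [Finset.prod_ite (fun _ => (X : R)) (fun _ => (Y : R)), Finset.prod_const, Finset.prod_const,
    card_filter_coe_lt hk]
  congr 2
  have := Finset.card_filter_add_card_filter_not (s := (Finset.univ : Finset (Fin n)))
    (p := fun j : Fin n => (j : ℕ) < k)
  rw [card_filter_coe_lt hk, Finset.card_univ, Fintype.card_fin] at this
  omega

/-- If `I = (x, y)` for a regular sequence `x, y` in a commutative ring `R` (that is,
`x` is a nonzerodivisor and `y` is a nonzerodivisor on `R/(x)`), then for every `n ≥ 1`
the natural surjection `Sym^n(I) → Iⁿ` is an isomorphism: the multiplication map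
`Sym^n(I) → R` is injective with image `Iⁿ`. -/
theorem symPow_mul_bijective_onto_pow (R : Type) [CommRing R] (x y : R)
    (hx : x ∈ nonZeroDivisors R)
    (hy : Ideal.Quotient.mk (Ideal.span {x}) y ∈ nonZeroDivisors (R ⧸ Ideal.span {x}))
    (n : ℕ) (hn : 1 ≤ n) :
    Function.Injective (symPowMul R (Ideal.span {x, y}) n) ∧
    LinearMap.range (symPowMul R (Ideal.span {x, y}) n) =
      Submodule.restrictScalars R ((Ideal.span {x, y} : Ideal R) ^ n) := by
  classical
  set I : Ideal R := Ideal.span {x, y} with hI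
  have hxI : x ∈ I := Ideal.subset_span (by simp)
  have hyI : y ∈ I := Ideal.subset_span (by simp)
  set X : ↥I := ⟨x, hxI⟩ with hXdef
  set Y : ↥I := ⟨y, hyI⟩ with hYdef
  have hXY : ∀ m : ↥I, ∃ a b : R, m = a • X + b • Y := by
    intro m
    have hm : (m : R) ∈ Ideal.span {x, y} := m.2
    obtain ⟨a, b, hab⟩ := Ideal.mem_span_pair.1 hm
    exact ⟨a, b, by ext; simp [hXdef, hYdef, ← hab]⟩
  set e : ℕ → SymPow R ↥I n := fun k =>
    Submodule.Quotient.mk (tprod R fun j : Fin n => if (j : ℕ) < k then X else Y) with he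
  have hμe : ∀ k, k ≤ n → symPowMul R I n (e k) = x^k * y^(n-k) := by
    intro k hk
    rw [he]
    exact symPowMul_e I n X Y hk
  have hrep : ∀ z : SymPow R ↥I n, ∃ c : Fin (n+1) → R, z = ∑ i, c i • e (i : ℕ) := by
    intro z
    obtain ⟨c, hc⟩ := (Submodule.mem_span_range_iff_exists_fun R (M := (⨂[R] _ : Fin n, ↥I) ⧸ symRel R ↥I n)).1 (SymPow.mem_span X Y hXY z)
    exact ⟨c, hc.symm⟩
  have hswap : ∀ k, k < n → x • e k = y • e (k+1) := by
    intro k hk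
    rw [he]
    exact SymPow.swap_smul X Y x y (by ext; simp [hXdef, hYdef, mul_comm]) hk
  have hker : ∀ z : SymPow R ↥I n, symPowMul R I n z = 0 → z = 0 := by
    intro z hz
    obtain ⟨c, rfl⟩ := hrep z
    set a : ℕ → R := fun i => if h : i < n + 1 then c ⟨i, h⟩ else 0 with ha
    have hae : ∀ i : Fin (n+1), a (i : ℕ) = c i := by
      intro i
      rw [ha]
      exact dif_pos i.isLt
    have hsum : (∑ i ∈ Finset.range (n+1), a i * x^i * y^(n-i)) = 0 := by
      rw [← hz, map_sum, ← Fin.sum_univ_eq_sum_range (fun i => a i * x^i * y^(n-i)) (n+1)]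
      refine Finset.sum_congr rfl fun i _ => ?_
      rw [map_smul, hμe (i : ℕ) (by omega), hae i, smul_eq_mul, mul_assoc]
    obtain ⟨c', h0, hN, hrel⟩ := syz x y hx hy n a hsum
    have hz' : (∑ i : Fin (n+1), c i • e (i : ℕ)) = ∑ i ∈ Finset.range (n+1), a i • e i := by
      rw [← Fin.sum_univ_eq_sum_range (fun i => a i • e i) (n+1)]
      exact Finset.sum_congr rfl fun i _ => by rw [hae i]
    rw [hz']
    have step : ∀ i ∈ Finset.range (n+1),
        a i • e i = (c' i * y) • e i - (c' (i+1) * x) • e i := by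
      intro i hi
      rw [hrel i (by simpa [Nat.lt_succ_iff] using hi), sub_smul, mul_comm y, mul_comm x]
    rw [Finset.sum_congr rfl step, Finset.sum_sub_distrib]
    rw [Finset.sum_range_succ' (fun i => (c' i * y) • e i) n,
      Finset.sum_range_succ (fun i => (c' (i+1) * x) • e i) n]
    rw [h0, hN]
    simp only [zero_mul, zero_smul, add_zero]
    have hterm : ∀ i ∈ Finset.range n, (c' (i+1) * y) • e (i+1) = (c' (i+1) * x) • e i := by
      intro i hi
      rw [mul_smul, mul_smul, ← hswap i (Finset.mem_range.1 hi)]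
    rw [Finset.sum_congr rfl hterm, sub_self]
  constructor
  · intro z w hzw
    have := hker (z - w) (by rw [map_sub, hzw, sub_self])
    exact sub_eq_zero.1 this
  · apply le_antisymm
    · rintro _ ⟨z, rfl⟩
      obtain ⟨c, rfl⟩ := hrep z
      rw [map_sum]
      simp only [Submodule.restrictScalars_mem]
      refine Submodule.sum_mem _ fun i _ => ?_
      rw [map_smul, hμe (i : ℕ) (by omega)]
      refine Submodule.smul_mem _ _ ?_
      have h1 : x^(i:ℕ) ∈ I^(i:ℕ) := Ideal.pow_mem_pow hxI _
      have h2 : y^(n-(i:ℕ)) ∈ I^(n-(i:ℕ)) := Ideal.pow_mem_pow hyI _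
      have h3 := Ideal.mul_mem_mul h1 h2
      rwa [← pow_add, Nat.add_sub_cancel' (by omega : (i:ℕ) ≤ n)] at h3
    · intro z hz
      have hz' : z ∈ Submodule.span R (({x, y} : Set R)^n) := by
        rw [← Submodule.span_pow]
        exact hz
      refine Submodule.span_le.2 ?_ hz'
      rintro w hw
      rw [Set.mem_pow] at hw
      obtain ⟨f, hf⟩ := hw
      refine ⟨Submodule.Quotient.mk (tprod R fun j => (⟨f j, Ideal.subset_span (f j).2⟩ : ↥I)), ?_⟩
      rw [symPowMul_mk_tprod, ← hf, List.prod_ofFn]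

end
end
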